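/- Fix reals β > 0, γ > 0 with βγ < 1. For each positive integer d define P_d(z) = ∑_{k=0}^d C(d,k) β^{C(k,2)} γ^{C(d−k,2)} z^k. Then for every d ≥ 2, all roots of P_d are distinct, real, and strictly negative. -/

import Mathlib

open Polynomial Finset

noncomputable def hpoly (q : ℝ) (d : ℕ) : ℝ[X] :=
  ∑ k ∈ Finset.range (d + 1), C ((d.choose k : ℝ) * q ^ (k.choose 2)) * X ^ k

lemma hpoly_coeff (q : ℝ) (d k : ℕ) :
    (hpoly q d).coeff k = (d.choose k : ℝ) * q ^ (k.choose 2) := by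
  rw [hpoly, finset_sum_coeff]
  simp only [coeff_C_mul, coeff_X_pow, mul_ite, mul_one, mul_zero]
  rw [Finset.sum_ite_eq (Finset.range (d+1)) k (fun j => (d.choose j : ℝ) * q ^ (j.choose 2))]
  by_cases hk : k ∈ Finset.range (d+1)
  · simp [hk]
  · simp only [hk, if_false]
    rw [Nat.choose_eq_zero_of_lt (by simpa using hk)]
    simp

lemma hpoly_eval (q : ℝ) (d : ℕ) (x : ℝ) :
    (hpoly q d).eval x = ∑ k ∈ Finset.range (d + 1), (d.choose k : ℝ) * q ^ (k.choose 2) * x ^ k := by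
  simp [hpoly, eval_finset_sum]

lemma hpoly_natDegree (q : ℝ) (hq : q ≠ 0) (d : ℕ) : (hpoly q d).natDegree = d := by
  apply le_antisymm
  · apply Polynomial.natDegree_le_iff_coeff_eq_zero.mpr
    intro m hm
    rw [hpoly_coeff, Nat.choose_eq_zero_of_lt hm]
    simp
  · apply Polynomial.le_natDegree_of_ne_zero
    rw [hpoly_coeff, Nat.choose_self]
    simpa using pow_ne_zero _ hq

lemma hpoly_leadingCoeff (q : ℝ) (hq : q ≠ 0) (d : ℕ) :
    (hpoly q d).leadingCoeff = q ^ (d.choose 2) := by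
  rw [Polynomial.leadingCoeff, hpoly_natDegree q hq, hpoly_coeff, Nat.choose_self]
  simp

lemma hpoly_eval_zero (q : ℝ) (d : ℕ) : (hpoly q d).eval 0 = 1 := by
  rw [← Polynomial.coeff_zero_eq_eval_zero, hpoly_coeff]
  simp


lemma hpoly_eval_succ (q : ℝ) (d : ℕ) (x : ℝ) :
    (hpoly q (d+1)).eval x = (hpoly q d).eval x + x * (hpoly q d).eval (q * x) := by
  rw [hpoly_eval, hpoly_eval, hpoly_eval]
  rw [Finset.sum_range_succ' (fun k => ((d+1).choose k : ℝ) * q ^ (k.choose 2) * x ^ k) (d+1)]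
  have split : ∀ k, (((d+1).choose (k+1) : ℝ)) * q ^ ((k+1).choose 2) * x ^ (k+1)
      = (d.choose (k+1) : ℝ) * q ^ ((k+1).choose 2) * x ^ (k+1)
        + x * ((d.choose k : ℝ) * q ^ (k.choose 2) * (q * x) ^ k) := by
    intro k
    have h1 : (d+1).choose (k+1) = d.choose k + d.choose (k+1) := Nat.choose_succ_succ d k
    have h2 : (k+1).choose 2 = k.choose 2 + k := by
      rw [Nat.choose_succ_succ k 1, Nat.choose_one_right, Nat.add_comm]
    rw [h1, h2]
    push_cast
    ring
  rw [Finset.sum_congr rfl (fun k _ => split k), Finset.sum_add_distrib]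
  rw [← Finset.mul_sum]
  have hAd : (d.choose (d+1) : ℝ) * q ^ ((d+1).choose 2) * x ^ (d+1) = 0 := by
    rw [Nat.choose_eq_zero_of_lt (Nat.lt_succ_self d)]
    simp
  rw [Finset.sum_range_succ (fun k => (d.choose (k+1) : ℝ) * q ^ ((k+1).choose 2) * x ^ (k+1)) d,
    hAd, add_zero]
  have := Finset.sum_range_succ' (fun k => (d.choose k : ℝ) * q ^ (k.choose 2) * x ^ k) d
  rw [this]
  simp only [Nat.choose_zero_right, Nat.cast_one]
  ring

lemma exists_root_between (F : ℝ[X]) (a b : ℝ) (hab : a < b)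
    (h : F.eval a * F.eval b < 0) : ∃ x, a < x ∧ x < b ∧ F.eval x = 0 := by
  have hc : ContinuousOn (fun x => F.eval x) (Set.Icc a b) :=
    (Polynomial.continuous F).continuousOn
  rcases mul_neg_iff.mp h with ⟨ha, hb⟩ | ⟨ha, hb⟩
  · have h0 : (0:ℝ) ∈ Set.Ioo (F.eval b) (F.eval a) := ⟨hb, ha⟩
    rcases intermediate_value_Ioo' hab.le hc h0 with ⟨x, hx, hfx⟩
    exact ⟨x, hx.1, hx.2, hfx⟩
  · have h0 : (0:ℝ) ∈ Set.Ioo (F.eval a) (F.eval b) := ⟨ha, hb⟩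
    rcases intermediate_value_Ioo hab.le hc h0 with ⟨x, hx, hfx⟩
    exact ⟨x, hx.1, hx.2, hfx⟩

lemma sign_prod_neg (u v : ℝ) (n : ℕ) (h1 : 0 < (-1)^n * u) (h2 : 0 < (-1)^(n+1) * v) :
    u * v < 0 := by
  have key : ((-1:ℝ)^n) * ((-1:ℝ)^(n+1)) = -1 := by
    rw [← pow_add]
    exact Odd.neg_one_pow ⟨n, by ring⟩
  nlinarith [mul_pos h1 h2]

lemma exists_far_left (F : ℝ[X]) (hdeg : 0 < F.natDegree) (hlc : 0 < F.leadingCoeff) (c : ℝ) :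
    ∃ w, w < c ∧ 0 < (-1)^F.natDegree * F.eval w := by
  set n := F.natDegree with hn
  set G := Polynomial.C ((-1:ℝ)^n) * (F.comp (-X)) with hG
  have hFne : F ≠ 0 := fun h => by simp [h] at hlc
  have hGdeg : G.natDegree = n := by
    rw [hG, Polynomial.natDegree_C_mul (a := ((-1:ℝ)^n)) (by positivity), Polynomial.natDegree_comp]
    simp
    exact hn.symm
  have hGlc : G.leadingCoeff = F.leadingCoeff := by
    rw [hG, Polynomial.leadingCoeff_mul, Polynomial.leadingCoeff_C,
      Polynomial.leadingCoeff_comp (by simp)]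
    simp only [Polynomial.leadingCoeff_neg, Polynomial.leadingCoeff_X]
    rw [← hn, mul_comm F.leadingCoeff, ← mul_assoc, ← pow_add]
    rw [Even.neg_one_pow ⟨n, rfl⟩, one_mul]
  have hGd : 0 < G.degree := by
    rw [← Polynomial.natDegree_pos_iff_degree_pos, hGdeg]
    exact hdeg
  have htend : Filter.Tendsto (fun x => G.eval x) Filter.atTop Filter.atTop :=
    Polynomial.tendsto_atTop_of_leadingCoeff_nonneg G hGd (by rw [hGlc]; exact hlc.le)
  have hev : ∀ᶠ (x:ℝ) in Filter.atTop, 0 < G.eval x ∧ -c < x :=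
    (htend.eventually_gt_atTop 0).and (Filter.eventually_gt_atTop (-c))
  rcases hev.exists with ⟨x, hx1, hx2⟩
  refine ⟨-x, by linarith, ?_⟩
  have hGx : G.eval x = (-1)^n * F.eval (-x) := by
    rw [hG]
    simp [Polynomial.eval_comp]
  rwa [hGx] at hx1

def Good (q : ℝ) (d : ℕ) (r : ℕ → ℝ) : Prop :=
  (∀ i j, i < j → j < d → r i < r j) ∧ (∀ i, i < d → r i < 0) ∧
  (∀ i, i + 1 < d → q * r i < r (i + 1)) ∧
  hpoly q d = C (q ^ d.choose 2) * ∏ i ∈ Finset.range d, (X - C (r i))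

lemma good_zero (q : ℝ) : Good q 0 (fun _ => 0) := by
  refine ⟨fun i j _ hj => absurd hj (Nat.not_lt_zero _),
    fun i hi => absurd hi (Nat.not_lt_zero _),
    fun i hi => absurd hi (Nat.not_lt_zero _), ?_⟩
  simp [hpoly]

lemma good_succ (q : ℝ) (hq0 : 0 < q) (hq1 : q < 1) (d : ℕ) (r : ℕ → ℝ)
    (hg : Good q d r) : ∃ t : ℕ → ℝ, Good q (d+1) t := by
  obtain ⟨hmono, hneg, hinv, hfac⟩ := hg
  have hqne : q ≠ 0 := hq0.ne'
  -- eval of H via factorization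
  have evalH : ∀ x, (hpoly q d).eval x = q ^ d.choose 2 * ∏ j ∈ Finset.range d, (x - r j) := by
    intro x
    rw [hfac]
    simp [eval_prod]
  have hHroot : ∀ i, i < d → (hpoly q d).eval (r i) = 0 := by
    intro i hi
    rw [evalH]
    rw [Finset.prod_eq_zero (Finset.mem_range.mpr hi) (by ring)]
    ring
  -- sign of H in gaps
  have signH : ∀ (x : ℝ) (i : ℕ), i ≤ d → (∀ j, j < i → r j < x) →
      (∀ j, i ≤ j → j < d → x < r j) → 0 < (-1)^(d-i) * (hpoly q d).eval x := by
    intro x i hi hlow hhigh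
    rw [evalH]
    have hsplit : ∏ j ∈ Finset.range d, (x - r j)
        = (∏ j ∈ Finset.range i, (x - r j)) * ∏ j ∈ Finset.Ico i d, (x - r j) := by
      rw [Finset.range_eq_Ico, Finset.range_eq_Ico]
      exact (Finset.prod_Ico_consecutive (fun j => x - r j) (Nat.zero_le i) hi).symm
    have hneg2 : ∏ j ∈ Finset.Ico i d, (x - r j)
        = (-1)^(d-i) * ∏ j ∈ Finset.Ico i d, (r j - x) := by
      rw [← Nat.card_Ico i d, ← Finset.prod_const (-1 : ℝ), ← Finset.prod_mul_distrib]
      exact Finset.prod_congr rfl (fun j _ => by ring)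
    have hP1 : 0 < ∏ j ∈ Finset.range i, (x - r j) :=
      Finset.prod_pos (fun j hj => sub_pos.mpr (hlow j (Finset.mem_range.mp hj)))
    have hP2 : 0 < ∏ j ∈ Finset.Ico i d, (r j - x) :=
      Finset.prod_pos (fun j hj => by
        have := Finset.mem_Ico.mp hj
        exact sub_pos.mpr (hhigh j this.1 this.2))
    have hqp : (0:ℝ) < q ^ d.choose 2 := pow_pos hq0 _
    rw [hsplit, hneg2]
    have hone : ((-1:ℝ)^(d-i)) * ((-1:ℝ)^(d-i)) = 1 := by
      rw [← pow_add]
      exact Even.neg_one_pow ⟨d - i, rfl⟩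
    nlinarith [mul_pos (mul_pos hqp hP1) hP2]
  have hFeval : ∀ x, (hpoly q (d+1)).eval x = (hpoly q d).eval x + x * (hpoly q d).eval (q * x) := fun x =>
    hpoly_eval_succ q d x
  -- basic root facts
  have hrneg : ∀ i, i < d → q * r i > r i := by
    intro i hi
    nlinarith [hneg i hi]
  have hs_lt : ∀ i, i < d → r i / q < r i := by
    intro i hi
    rw [div_lt_iff₀ hq0]
    nlinarith [hneg i hi]
  have hrs : ∀ j i, j < i → i < d → r j < r i / q := by
    intro j i hji hid
    rw [lt_div_iff₀ hq0]
    have h1 : q * r j < r (j+1) := hinv j (by omega)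
    rcases Nat.lt_or_ge (j+1) i with hc | hc
    · have := hmono (j+1) i hc hid
      nlinarith
    · have : j + 1 = i := by omega
      rw [this] at h1
      nlinarith
  -- sign of F at s i = r i / q
  have hFs : ∀ i, i < d → 0 < (-1)^(d-i) * (hpoly q (d+1)).eval (r i / q) := by
    intro i hi
    have hq : q * (r i / q) = r i := by field_simp
    rw [hFeval, hq, hHroot i hi, mul_zero, add_zero]
    refine signH (r i / q) i hi.le (fun j hj => hrs j i hj hi) (fun j hij hjd => ?_)
    rcases Nat.lt_or_ge i j with hc | hc
    · exact lt_trans (hs_lt i hi) (hmono i j hc hjd)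
    · have : i = j := by omega
      rw [← this]
      exact hs_lt i hi
  -- sign of F at r i
  have hFr : ∀ i, i < d → 0 < (-1)^(d-i) * (hpoly q (d+1)).eval (r i) := by
    intro i hi
    rw [hFeval, hHroot i hi, zero_add]
    have hsign : 0 < (-1)^(d-(i+1)) * (hpoly q d).eval (q * r i) := by
      refine signH (q * r i) (i+1) (by omega) (fun j hj => ?_) (fun j hij hjd => ?_)
      · rcases Nat.lt_or_ge j i with hc | hc
        · exact lt_trans (hmono j i hc hi) (hrneg i hi)
        · have : j = i := by omega
          rw [this]; exact hrneg i hi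
      · have h1 : q * r i < r (i+1) := hinv i (by omega)
        rcases Nat.lt_or_ge (i+1) j with hc | hc
        · exact lt_trans h1 (hmono (i+1) j hc hjd)
        · have : i + 1 = j := by omega
          rw [← this]; exact h1
    have hdi : d - i = (d - (i+1)) + 1 := by omega
    rw [hdi, pow_succ]
    have hri : r i < 0 := hneg i hi
    nlinarith [hsign]
  have hF0 : (hpoly q (d+1)).eval 0 = 1 := hpoly_eval_zero q (d+1)
  -- degree facts for F
  have hFdeg : (hpoly q (d+1)).natDegree = d + 1 := hpoly_natDegree q hqne (d+1)
  have hFlc : (hpoly q (d+1)).leadingCoeff = q ^ ((d+1).choose 2) := hpoly_leadingCoeff q hqne (d+1)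
  -- far left point
  obtain ⟨w, hwc, hwsign⟩ := exists_far_left (hpoly q (d+1)) (by rw [hFdeg]; omega) (by rw [hFlc]; positivity)
    (min 0 (r 0 / q))
  rw [hFdeg] at hwsign
  -- interval endpoints
  set a : ℕ → ℝ := fun i => if i = 0 then w else r (i-1) with ha
  set b : ℕ → ℝ := fun i => if i < d then r i / q else 0 with hb
  have hroot : ∀ i, i ≤ d → ∃ x, a i < x ∧ x < b i ∧ (hpoly q (d+1)).eval x = 0 := by
    intro i hi
    apply exists_root_between
    · -- a i < b i
      rcases Nat.eq_zero_or_pos i with h0 | h0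
      · subst h0
        simp only [ha, hb, if_pos rfl]
        by_cases hd : 0 < d
        · rw [if_pos hd]
          exact lt_of_lt_of_le hwc (min_le_right _ _)
        · rw [if_neg hd]
          exact lt_of_lt_of_le hwc (min_le_left _ _)
      · obtain ⟨j, rfl⟩ : ∃ j, i = j + 1 := ⟨i - 1, by omega⟩
        simp only [ha, hb, if_neg (Nat.succ_ne_zero j), Nat.add_sub_cancel]
        by_cases hc : j + 1 < d
        · rw [if_pos hc]
          rw [lt_div_iff₀ hq0]
          have := hinv j hc
          nlinarith
        · rw [if_neg hc]
          exact hneg j (by omega)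
    · -- sign product negative
      rcases Nat.eq_zero_or_pos i with h0 | h0
      · subst h0
        simp only [ha, hb, if_pos rfl]
        by_cases hd : 0 < d
        · rw [if_pos hd]
          rw [mul_comm]
          apply sign_prod_neg _ _ d (hFs 0 hd)
          have : d + 1 = d - 0 + 1 := by omega
          rw [show d - 0 + 1 = d + 1 from by omega] at *
          exact hwsign
        · rw [if_neg hd]
          have hd0 : d = 0 := by omega
          rw [mul_comm]
          apply sign_prod_neg _ _ 0
          · rw [hF0]; norm_num
          · rw [pow_one]
            subst hd0
            simpa using hwsign
      · obtain ⟨j, rfl⟩ : ∃ j, i = j + 1 := ⟨i - 1, by omega⟩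
        simp only [ha, hb, if_neg (Nat.succ_ne_zero j), Nat.add_sub_cancel]
        by_cases hc : j + 1 < d
        · rw [if_pos hc, mul_comm]
          apply sign_prod_neg _ _ (d - (j+1)) (hFs (j+1) hc)
          have : d - (j+1) + 1 = d - j := by omega
          rw [this]
          exact hFr j (by omega)
        · rw [if_neg hc]
          have hjd : j + 1 = d := by omega
          rw [mul_comm]
          apply sign_prod_neg _ _ 0
          · rw [hF0]; norm_num
          · rw [pow_one]
            have := hFr j (by omega)
            rw [show d - j = 1 from by omega] at this
            simpa using this
  choose! t ht using hroot
  have hta : ∀ i, i ≤ d → a i < t i := fun i hi => (ht i hi).1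
  have htb : ∀ i, i ≤ d → t i < b i := fun i hi => (ht i hi).2.1
  have htz : ∀ i, i ≤ d → (hpoly q (d+1)).eval (t i) = 0 := fun i hi => (ht i hi).2.2
  have hbneg : ∀ i, i ≤ d → b i ≤ 0 := by
    intro i hi
    simp only [hb]
    split
    · exact le_of_lt (div_neg_of_neg_of_pos (hneg i ‹_›) hq0)
    · exact le_refl 0
  have htneg : ∀ i, i ≤ d → t i < 0 := fun i hi => lt_of_lt_of_le (htb i hi) (hbneg i hi)
  have hstep : ∀ i, i < d → t i < t (i+1) := by
    intro i hi
    have h1 : t i < b i := htb i hi.le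
    have h2 : b i = r i / q := by simp [hb, hi]
    have h3 : a (i+1) = r i := by simp [ha]
    have h4 : a (i+1) < t (i+1) := hta (i+1) (by omega)
    have h5 := hs_lt i hi
    rw [h2] at h1
    rw [h3] at h4
    linarith
  have htmono : ∀ j, j ≤ d → ∀ i, i < j → t i < t j := by
    intro j
    induction j with
    | zero => intro _ i hi; omega
    | succ n ih =>
      intro hn i hi
      rcases Nat.lt_or_ge i n with hc | hc
      · exact lt_trans (ih (by omega) i hc) (hstep n (by omega))
      · have hin : i = n := by omega
        subst hin
        exact hstep i (by omega)
  have hqt : ∀ i, i + 1 < d + 1 → q * t i < t (i+1) := by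
    intro i hi
    have hid : i < d := by omega
    have h1 : t i < r i / q := by
      have := htb i (by omega)
      simpa [hb, hid] using this
    have h2 : q * t i < r i := by
      have h2a : q * t i < q * (r i / q) := by
        exact (mul_lt_mul_iff_right₀ hq0).mpr h1
      have h2b : q * (r i / q) = r i := by field_simp
      linarith
    have h3 : r i < t (i+1) := by
      have := hta (i+1) (by omega)
      simpa [ha] using this
    linarith
  refine ⟨t, fun i j hij hj => htmono j (by omega) i hij,
    fun i hi => htneg i (by omega), hqt, ?_⟩
  -- factorization of hpoly q (d+1)
  have hFne : (hpoly q (d+1)) ≠ 0 := by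
    intro hz
    rw [hz] at hFlc
    simp only [Polynomial.leadingCoeff_zero] at hFlc
    exact (pow_ne_zero _ hqne) hFlc.symm
  set T : Multiset ℝ := (Multiset.range (d+1)).map t with hT
  have hTnodup : T.Nodup := by
    refine Multiset.Nodup.map_on ?_ (Multiset.nodup_range _)
    intro i hi j hj hij
    have hi' : i < d + 1 := Multiset.mem_range.mp hi
    have hj' : j < d + 1 := Multiset.mem_range.mp hj
    by_contra hne
    rcases Nat.lt_or_ge i j with hc | hc
    · exact absurd hij (ne_of_lt (htmono j (by omega) i hc))
    · have hc2 : j < i := by omega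
      exact absurd hij.symm (ne_of_lt (htmono i (by omega) j hc2))
  have hle : T ≤ (hpoly q (d+1)).roots := by
    rw [Multiset.le_iff_subset hTnodup]
    intro x hx
    rcases Multiset.mem_map.mp hx with ⟨i, hi, rfl⟩
    have hi' : i < d + 1 := Multiset.mem_range.mp hi
    rw [Polynomial.mem_roots hFne]
    exact htz i (by omega)
  have hcard : Multiset.card (hpoly q (d+1)).roots ≤ d+1 := by
    have := Polynomial.card_roots' (hpoly q (d+1))
    rwa [hFdeg] at this
  have hTcard : Multiset.card T = d+1 := by simp [hT]
  have hTeq : T = (hpoly q (d+1)).roots :=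
    Multiset.eq_of_le_of_card_le hle (by rw [hTcard]; exact hcard)
  have hfull : Multiset.card (hpoly q (d+1)).roots = (hpoly q (d+1)).natDegree := by
    rw [← hTeq, hTcard, hFdeg]
  have hfac2 := Polynomial.C_leadingCoeff_mul_prod_multiset_X_sub_C hfull
  rw [← hTeq, hFlc] at hfac2
  rw [← hfac2, hT]
  congr 1
  rw [Multiset.map_map, Finset.prod_eq_multiset_prod, Finset.range_val]
  rfl

lemma good_exists (q : ℝ) (hq0 : 0 < q) (hq1 : q < 1) : ∀ d, ∃ r, Good q d r := by
  intro d
  induction d with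
  | zero => exact ⟨_, good_zero q⟩
  | succ n ih =>
    rcases ih with ⟨r, hr⟩
    exact good_succ q hq0 hq1 n r hr

lemma choose_two_mul_two (n : ℕ) : n.choose 2 * 2 = n * (n - 1) := by
  induction n with
  | zero => simp
  | succ m ih =>
    rw [Nat.choose_succ_succ m 1, Nat.choose_one_right, add_mul, ih]
    rcases m with _ | m'
    · simp
    · simp only [Nat.succ_sub_one]
      ring

lemma exp_id (d k : ℕ) (hk : k ≤ d) :
    k * (d - 1) + (d - k).choose 2 = d.choose 2 + k.choose 2 := by
  obtain ⟨m, rfl⟩ : ∃ m, d = k + m := ⟨d - k, by omega⟩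
  apply Nat.eq_of_mul_eq_mul_right (show 0 < 2 by norm_num)
  rw [add_mul, add_mul, choose_two_mul_two, choose_two_mul_two]
  rw [show k + m - k = m from by omega, choose_two_mul_two]
  rcases k with _ | k' <;> rcases m with _ | m'
  · simp
  · simp only [Nat.zero_add, Nat.zero_mul, Nat.mul_zero, Nat.succ_sub_one, Nat.zero_mul]
    omega
  · simp only [Nat.add_zero, Nat.succ_sub_one]
    ring_nf
  · rw [show k' + 1 + (m' + 1) - 1 = k' + m' + 1 from by omega,
      show k' + 1 - 1 = k' from by omega, show m' + 1 - 1 = m' from by omega]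
    ring

/-- All roots of the local polynomial of the antiferromagnetic two-spin edge
model are distinct, real, and strictly negative. -/
theorem stmt7 (β γ : ℝ) (hβ : 0 < β) (hγ : 0 < γ) (h : β * γ < 1)
    (d : ℕ) (hd : 2 ≤ d) (P : Polynomial ℂ)
    (hP : P = ∑ k ∈ Finset.range (d + 1),
      Polynomial.C
        (((d.choose k : ℝ) * β ^ (k.choose 2) * γ ^ ((d - k).choose 2) : ℝ) : ℂ)
        * Polynomial.X ^ k) :
    P.roots.card = d ∧ P.roots.Nodup ∧
      ∀ z ∈ P.roots, z.im = 0 ∧ z.re < 0 := by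
  have hq0 : 0 < β * γ := mul_pos hβ hγ
  obtain ⟨r, hmono, hneg, hinv, hfac⟩ := good_exists (β * γ) hq0 h d
  set q : ℝ := β * γ with hqdef
  set u : ℝ := γ ^ (d - 1) with hu
  have hu0 : 0 < u := pow_pos hγ _
  have hune : (u:ℂ) ≠ 0 := by
    simp only [ne_eq, Complex.ofReal_eq_zero]
    exact hu0.ne'
  set z : ℕ → ℂ := fun i => ((u * r i : ℝ) : ℂ) with hz
  set A : ℂ := ((γ ^ d.choose 2 * q ^ d.choose 2 : ℝ) : ℂ) * ((u:ℂ) ^ d)⁻¹ with hA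
  -- real coefficient identity
  have hreal : ∀ k, k ≤ d →
      ((d.choose k : ℝ) * β ^ k.choose 2 * γ ^ ((d - k).choose 2)) * u ^ k
      = (γ ^ d.choose 2) * ((d.choose k : ℝ) * q ^ k.choose 2) := by
    intro k hk
    have hexp : γ ^ ((d - k).choose 2) * γ ^ ((d - 1) * k)
        = γ ^ d.choose 2 * γ ^ k.choose 2 := by
      rw [← pow_add, ← pow_add]
      congr 1
      rw [Nat.mul_comm (d-1) k, Nat.add_comm]
      exact exp_id d k hk
    rw [hu, ← pow_mul, hqdef, mul_pow]
    linear_combination ((d.choose k : ℝ) * β ^ k.choose 2) * hexp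
  have hAne : A ≠ 0 := by
    rw [hA]
    apply mul_ne_zero
    · simp only [ne_eq, Complex.ofReal_eq_zero]
      positivity
    · exact inv_ne_zero (pow_ne_zero _ hune)
  -- polynomial identity over ℂ
  have hPfac : P = C A * ∏ i ∈ Finset.range d, (X - C (z i)) := by
    apply Polynomial.funext
    intro x
    rw [hP, Polynomial.eval_finset_sum]
    simp only [Polynomial.eval_mul, Polynomial.eval_pow, Polynomial.eval_C, Polynomial.eval_X]
    rw [Polynomial.eval_prod]
    simp only [Polynomial.eval_sub, Polynomial.eval_X, Polynomial.eval_C]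
    -- rewrite each term
    have key : ∀ k ∈ Finset.range (d+1),
        (((d.choose k : ℝ) * β ^ k.choose 2 * γ ^ ((d - k).choose 2) : ℝ) : ℂ) * x ^ k
        = ((γ ^ d.choose 2 : ℝ) : ℂ) *
          ((((d.choose k : ℝ) * q ^ k.choose 2 : ℝ) : ℂ) * (x * (u:ℂ)⁻¹) ^ k) := by
      intro k hk
      have hk' : k ≤ d := by
        have := Finset.mem_range.mp hk
        omega
      have hcast := congrArg (Complex.ofReal) (hreal k hk')
      push_cast at hcast
      have hupow : ((u:ℂ))^k ≠ 0 := pow_ne_zero _ hune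
      push_cast
      rw [mul_pow, inv_pow]
      linear_combination (x ^ k * ((u:ℂ)^k)⁻¹) * hcast - ((d.choose k:ℂ) * (β:ℂ)^k.choose 2 * (γ:ℂ)^((d-k).choose 2) * x^k) * mul_inv_cancel₀ hupow
    rw [Finset.sum_congr rfl key, ← Finset.mul_sum]
    -- evaluate mapped factorization at y = x * u⁻¹
    have hfac' : hpoly q d = C (q ^ d.choose 2) * ∏ i ∈ Finset.range d, (X - C (r i)) := hfac
    have hmap := congrArg (Polynomial.eval₂ Complex.ofRealHom (x * (u:ℂ)⁻¹)) hfac'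
    rw [hpoly] at hmap
    rw [Polynomial.eval₂_finset_sum] at hmap
    simp only [Polynomial.eval₂_mul, Polynomial.eval₂_C, Polynomial.eval₂_X_pow,
      Polynomial.eval₂_finset_prod, Polynomial.eval₂_sub, Polynomial.eval₂_X,
      Complex.ofRealHom_eq_coe] at hmap
    push_cast at hmap ⊢
    rw [hmap]
    -- now transform the product
    have hfactor : ∀ i ∈ Finset.range d,
        (x * (u:ℂ)⁻¹ - ((r i : ℝ) : ℂ)) = (x - z i) * (u:ℂ)⁻¹ := by
      intro i _
      rw [hz]
      push_cast
      field_simp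
    rw [Finset.prod_congr rfl hfactor, Finset.prod_mul_distrib, Finset.prod_const,
      Finset.card_range, hA]
    push_cast
    rw [inv_pow]
    ring
  -- roots computation
  have hroots : P.roots = (Multiset.range d).map z := by
    rw [hPfac, Polynomial.roots_C_mul _ hAne]
    have hprod : ∏ i ∈ Finset.range d, (X - C (z i))
        = (((Multiset.range d).map z).map (fun w => X - C w)).prod := by
      rw [Multiset.map_map, Finset.prod_eq_multiset_prod, Finset.range_val]
      rfl
    rw [hprod, Polynomial.roots_multiset_prod_X_sub_C]
  refine ⟨?_, ?_, ?_⟩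
  · rw [hroots]
    simp
  · rw [hroots]
    refine Multiset.Nodup.map_on ?_ (Multiset.nodup_range _)
    intro i hi j hj hij
    have hi' : i < d := Multiset.mem_range.mp hi
    have hj' : j < d := Multiset.mem_range.mp hj
    have hrij : r i = r j := by
      have hij2 : ((u * r i : ℝ) : ℂ) = ((u * r j : ℝ) : ℂ) := hij
      have hij3 : (u * r i : ℝ) = (u * r j : ℝ) := by exact_mod_cast hij2
      exact mul_left_cancel₀ hu0.ne' hij3
    by_contra hne
    rcases Nat.lt_or_ge i j with hc | hc
    · exact absurd hrij (ne_of_lt (hmono i j hc hj'))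
    · have hc2 : j < i := by omega
      exact absurd hrij.symm (ne_of_lt (hmono j i hc2 hi'))
  · intro w hw
    rw [hroots] at hw
    rcases Multiset.mem_map.mp hw with ⟨i, hi, rfl⟩
    have hi' : i < d := Multiset.mem_range.mp hi
    constructor
    · simp [hz]
    · simp only [hz, Complex.ofReal_re]
      exact mul_neg_of_pos_of_neg hu0 (hneg i hi')
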